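/- Series representation of the one-sided stable density (Lemma 1): for 0 < γ < 1, a = Γ(1-γ), and any ε > 0, the series f_γ(t) = (1/π) Σ_{n=1}^∞ (-1)^{n+1} (a^n sin(nπγ)/n!) Γ(nγ+1) t^{-nγ-1} converges absolutely and uniformly for t ≥ ε. -/

import Mathlib

open Real Filter

/-- Gautschi-type inequality from log-convexity of Gamma. -/
lemma gautschi_aux {γ x : ℝ} (hγ0 : 0 < γ) (hγ1 : γ < 1) (hx : 0 < x) :
    Real.Gamma (x + γ) ≤ Real.Gamma x * x ^ γ := by
  have hΓx : 0 < Real.Gamma x := Real.Gamma_pos_of_pos hx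
  have hΓx1 : 0 < Real.Gamma (x + 1) := Real.Gamma_pos_of_pos (by linarith)
  have hΓxγ : 0 < Real.Gamma (x + γ) := Real.Gamma_pos_of_pos (by linarith)
  have hconv := Real.convexOn_log_Gamma.2 (Set.mem_Ioi.2 hx)
    (Set.mem_Ioi.2 (show (0:ℝ) < x + 1 by linarith))
    (show (0:ℝ) ≤ 1 - γ by linarith) (le_of_lt hγ0) (by ring)
  have hcomb : (1 - γ) • x + γ • (x + 1) = x + γ := by simp [smul_eq_mul]; ring
  rw [hcomb] at hconv
  simp only [Function.comp_apply, smul_eq_mul] at hconv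
  have hrec : Real.Gamma (x + 1) = x * Real.Gamma x :=
    Real.Gamma_add_one (ne_of_gt hx)
  rw [hrec, Real.log_mul (ne_of_gt hx) (ne_of_gt hΓx)] at hconv
  have hlog : Real.log (Real.Gamma (x + γ)) ≤ Real.log (Real.Gamma x) + γ * Real.log x := by
    nlinarith [hconv]
  have := Real.exp_le_exp.2 hlog
  rwa [Real.exp_log hΓxγ, Real.exp_add, Real.exp_log hΓx,
    mul_comm γ (Real.log x), ← Real.rpow_def_of_pos hx] at this

theorem stmt15 (γ : ℝ) (hγ0 : 0 < γ) (hγ1 : γ < 1) (ε : ℝ) (hε : 0 < ε)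
    (a : ℝ) (ha : a = Real.Gamma (1 - γ))
    (b : ℕ → ℝ → ℝ)
    (hb : ∀ (n : ℕ) (t : ℝ), b n t =
      (1 / π) * (-1 : ℝ) ^ (n + 1 + 1) * (a ^ (n + 1) * Real.sin ((n + 1) * π * γ) /
        (Nat.factorial (n + 1) : ℝ)) * Real.Gamma ((n + 1) * γ + 1) *
        t ^ (-((n : ℝ) + 1) * γ - 1)) :
    (∀ t : ℝ, ε ≤ t → Summable (fun n : ℕ => |b n t|)) ∧
      TendstoUniformlyOn (fun N : ℕ => fun t : ℝ => ∑ n ∈ Finset.range N, b n t)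
        (fun t : ℝ => ∑' n : ℕ, b n t) atTop (Set.Ici ε) := by
  have ha0 : 0 < a := ha ▸ Real.Gamma_pos_of_pos (by linarith)
  have hπ : (0:ℝ) < π := Real.pi_pos
  -- the majorant
  set M : ℕ → ℝ := fun n => (1 / π) * (a ^ (n + 1) / (Nat.factorial (n + 1) : ℝ)) *
      Real.Gamma (((n : ℝ) + 1) * γ + 1) * ε ^ (-((n : ℝ) + 1) * γ - 1) with hM
  have hMpos : ∀ n, 0 < M n := by
    intro n
    have h1 : 0 < Real.Gamma (((n : ℝ) + 1) * γ + 1) :=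
      Real.Gamma_pos_of_pos (by positivity)
    have h2 : 0 < ε ^ (-((n : ℝ) + 1) * γ - 1) := Real.rpow_pos_of_pos hε _
    positivity
  -- ratio bound
  have hratio : ∀ n : ℕ, M (n + 1) ≤ (a * ε ^ (-γ) * ((n : ℝ) + 2) ^ (γ - 1)) * M n := by
    intro n
    have hx : (0:ℝ) < ((n : ℝ) + 1) * γ + 1 := by positivity
    have hgau := gautschi_aux hγ0 hγ1 hx
    have hΓpos : 0 < Real.Gamma (((n : ℝ) + 1) * γ + 1) := Real.Gamma_pos_of_pos hx
    have hxle : ((n : ℝ) + 1) * γ + 1 ≤ (n : ℝ) + 2 := by nlinarith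
    have hpowle : (((n : ℝ) + 1) * γ + 1) ^ γ ≤ ((n : ℝ) + 2) ^ γ :=
      Real.rpow_le_rpow (le_of_lt hx) hxle (le_of_lt hγ0)
    have hΓle : Real.Gamma (((n : ℝ) + 2) * γ + 1) ≤
        Real.Gamma (((n : ℝ) + 1) * γ + 1) * ((n : ℝ) + 2) ^ γ := by
      have harg : ((n : ℝ) + 2) * γ + 1 = (((n : ℝ) + 1) * γ + 1) + γ := by ring
      rw [harg]
      exact hgau.trans (mul_le_mul_of_nonneg_left hpowle (le_of_lt hΓpos))
    -- powers of ε
    have hεpow : ε ^ (-((n : ℝ) + 1 + 1) * γ - 1) =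
        ε ^ (-((n : ℝ) + 1) * γ - 1) * ε ^ (-γ) := by
      rw [← Real.rpow_add hε]; ring_nf
    have hfact : ((Nat.factorial (n + 1 + 1) : ℝ)) =
        ((n : ℝ) + 2) * (Nat.factorial (n + 1) : ℝ) := by
      rw [Nat.factorial_succ]; push_cast; ring
    have hεg : 0 < ε ^ (-γ) := Real.rpow_pos_of_pos hε _
    have hε1 : 0 < ε ^ (-((n : ℝ) + 1) * γ - 1) := Real.rpow_pos_of_pos hε _
    have hn2 : (0:ℝ) < (n : ℝ) + 2 := by positivity
    have hpγ : 0 < ((n : ℝ) + 2) ^ γ := Real.rpow_pos_of_pos hn2 _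
    have hpow1 : ((n : ℝ) + 2) ^ (γ - 1) = ((n : ℝ) + 2) ^ γ / ((n : ℝ) + 2) := by
      rw [← Real.rpow_sub_one (ne_of_gt hn2)]
    simp only [hM]
    push_cast
    rw [hpow1]
    have key : Real.Gamma (((n : ℝ) + 1 + 1) * γ + 1) ≤
        Real.Gamma (((n : ℝ) + 1) * γ + 1) * ((n : ℝ) + 2) ^ γ := by
      convert hΓle using 3; ring
    calc 1 / π * (a ^ (n + 1 + 1) / ↑(n + 1 + 1).factorial) *
          Real.Gamma ((↑n + 1 + 1) * γ + 1) * ε ^ (-(↑n + 1 + 1) * γ - 1)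
        ≤ 1 / π * (a ^ (n + 1 + 1) / ↑(n + 1 + 1).factorial) *
          (Real.Gamma ((↑n + 1) * γ + 1) * ((n : ℝ) + 2) ^ γ) * ε ^ (-(↑n + 1 + 1) * γ - 1) := by
          have hc : (0:ℝ) < 1 / π * (a ^ (n + 1 + 1) / ↑(n + 1 + 1).factorial) := by positivity
          have hεp : 0 < ε ^ (-((n : ℝ) + 1 + 1) * γ - 1) := Real.rpow_pos_of_pos hε _
          nlinarith [mul_le_mul_of_nonneg_left key (le_of_lt hc)]
      _ = a * ε ^ (-γ) * (((n : ℝ) + 2) ^ γ / ((n : ℝ) + 2)) *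
          (1 / π * (a ^ (n + 1) / ↑(n + 1).factorial) *
            Real.Gamma ((↑n + 1) * γ + 1) * ε ^ (-(↑n + 1) * γ - 1)) := by
          rw [hεpow, hfact]
          field_simp
          ring
  -- M is summable via ratio test
  have hMsum : Summable M := by
    have htend : Tendsto (fun n : ℕ => a * ε ^ (-γ) * ((n : ℝ) + 2) ^ (γ - 1)) atTop (nhds 0) := by
      have h1 : Tendsto (fun x : ℝ => x ^ (-(1 - γ))) atTop (nhds 0) :=
        tendsto_rpow_neg_atTop (by linarith)
      have h2 : Tendsto (fun n : ℕ => (n : ℝ) + 2) atTop atTop :=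
        tendsto_atTop_add_const_right _ _ tendsto_natCast_atTop_atTop
      have h3 : Tendsto (fun n : ℕ => ((n : ℝ) + 2) ^ (γ - 1)) atTop (nhds 0) := by
        have := h1.comp h2
        simpa [neg_sub, Function.comp_def] using this
      simpa using (h3.const_mul (a * ε ^ (-γ)))
    have hev : ∀ᶠ n : ℕ in atTop, a * ε ^ (-γ) * ((n : ℝ) + 2) ^ (γ - 1) ≤ 1 / 2 := by
      have := htend.eventually_le_const (show (0:ℝ) < 1/2 by norm_num)
      exact this
    refine summable_of_ratio_norm_eventually_le (show (1:ℝ)/2 < 1 by norm_num) ?_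
    filter_upwards [hev] with n hn
    rw [Real.norm_eq_abs, Real.norm_eq_abs, abs_of_pos (hMpos _), abs_of_pos (hMpos _)]
    calc M (n + 1) ≤ (a * ε ^ (-γ) * ((n : ℝ) + 2) ^ (γ - 1)) * M n := hratio n
      _ ≤ 1 / 2 * M n := by
          exact mul_le_mul_of_nonneg_right hn (le_of_lt (hMpos n))
  -- pointwise bound |b n t| ≤ M n for t ≥ ε
  have hbound : ∀ (n : ℕ) (t : ℝ), t ∈ Set.Ici ε → ‖b n t‖ ≤ M n := by
    intro n t ht
    have htpos : 0 < t := lt_of_lt_of_le hε ht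
    have hΓpos : 0 < Real.Gamma (((n : ℝ) + 1) * γ + 1) :=
      Real.Gamma_pos_of_pos (by positivity)
    have hexp : -((n : ℝ) + 1) * γ - 1 ≤ 0 := by nlinarith
    have htle : t ^ (-((n : ℝ) + 1) * γ - 1) ≤ ε ^ (-((n : ℝ) + 1) * γ - 1) :=
      Real.rpow_le_rpow_of_nonpos hε ht hexp
    have htnn : 0 ≤ t ^ (-((n : ℝ) + 1) * γ - 1) := le_of_lt (Real.rpow_pos_of_pos htpos _)
    rw [Real.norm_eq_abs, hb]
    rw [abs_mul, abs_mul, abs_mul]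
    have h1 : |1 / π * (-1 : ℝ) ^ (n + 1 + 1)| = 1 / π := by
      rw [abs_mul, abs_pow, abs_neg, abs_one, one_pow, mul_one, abs_of_pos (by positivity)]
    have h2 : |a ^ (n + 1) * Real.sin (((n : ℝ) + 1) * π * γ) / (Nat.factorial (n + 1) : ℝ)|
        ≤ a ^ (n + 1) / (Nat.factorial (n + 1) : ℝ) := by
      rw [abs_div, abs_mul, abs_pow, abs_of_pos ha0,
        abs_of_pos (show (0:ℝ) < (Nat.factorial (n + 1) : ℝ) by positivity)]
      have hs : |Real.sin (((n : ℝ) + 1) * π * γ)| ≤ 1 := Real.abs_sin_le_one _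
      have : a ^ (n + 1) * |Real.sin (((n : ℝ) + 1) * π * γ)| ≤ a ^ (n + 1) * 1 :=
        mul_le_mul_of_nonneg_left hs (by positivity)
      calc a ^ (n + 1) * |Real.sin (((n : ℝ) + 1) * π * γ)| / (Nat.factorial (n + 1) : ℝ)
          ≤ a ^ (n + 1) * 1 / (Nat.factorial (n + 1) : ℝ) := by
            apply div_le_div_of_nonneg_right this (by positivity) |>.trans_eq rfl
        _ = a ^ (n + 1) / (Nat.factorial (n + 1) : ℝ) := by ring
    have h3 : |Real.Gamma (((n : ℝ) + 1) * γ + 1)| = Real.Gamma (((n : ℝ) + 1) * γ + 1) :=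
      abs_of_pos hΓpos
    have h4 : |t ^ (-((n : ℝ) + 1) * γ - 1)| = t ^ (-((n : ℝ) + 1) * γ - 1) :=
      abs_of_nonneg htnn
    push_cast at h1 h2 h3 h4
    rw [h1, h3, h4]
    simp only [hM]
    calc 1 / π * |a ^ (n + 1) * Real.sin ((↑n + 1) * π * γ) / ↑(n + 1).factorial| *
            Real.Gamma ((↑n + 1) * γ + 1) * t ^ (-(↑n + 1) * γ - 1)
        ≤ 1 / π * (a ^ (n + 1) / ↑(n + 1).factorial) *
            Real.Gamma ((↑n + 1) * γ + 1) * t ^ (-(↑n + 1) * γ - 1) := by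
          apply mul_le_mul_of_nonneg_right _ htnn
          apply mul_le_mul_of_nonneg_right _ (le_of_lt hΓpos)
          exact mul_le_mul_of_nonneg_left h2 (by positivity)
      _ ≤ 1 / π * (a ^ (n + 1) / ↑(n + 1).factorial) *
            Real.Gamma ((↑n + 1) * γ + 1) * ε ^ (-(↑n + 1) * γ - 1) := by
          apply mul_le_mul_of_nonneg_left htle
          positivity
  refine ⟨?_, ?_⟩
  · intro t ht
    apply Summable.of_nonneg_of_le (fun n => abs_nonneg _) (fun n => ?_) hMsum
    simpa [Real.norm_eq_abs] using hbound n t ht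
  · exact tendstoUniformlyOn_tsum_nat hMsum hbound
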